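/- Let X be a set, Y a finite set, and ℋ ⊆ Y^X a family such that for every probability measure μ on X and every ε ∈ (0,1) there is a subset ℋ' ⊆ ℋ with |ℋ'| ≤ M(ε) (for some function M independent of μ) such that every F ∈ ℋ satisfies μ({x : F(x) ≠ H(x)}) ≤ ε for some H ∈ ℋ'. Then the Natarajan dimension of ℋ is finite; more precisely, Nat(ℋ) ≤ min over ε ∈ (0,1/2) of ⌊log₂⌊M(ε)⌋ / (1 − h₂(ε))⌋. -/

import Mathlib

open MeasureTheory
open scoped symmDiff ENNReal

/-- Binary entropy function. -/
noncomputable def binEnt (t : ℝ) : ℝ :=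
  t * Real.logb 2 (1 / t) + (1 - t) * Real.logb 2 (1 / (1 - t))

/-- `ℱ` Natarajan-shatters the finite set `A`. -/
def NatShatters {X Y : Type*} [DecidableEq X] (ℱ : Set (X → Y)) (A : Finset X) : Prop :=
  ∃ f₀ f₁ : X → Y, (∀ a ∈ A, f₀ a ≠ f₁ a) ∧
    ∀ U ⊆ A, ∃ g ∈ ℱ, ∀ a ∈ A, g a = if a ∈ U then f₁ a else f₀ a

lemma ball_count {X : Type*} [DecidableEq X] (A : Finset X) (k : ℕ) :
    (A.powerset.filter fun V => V.card ≤ k).card = ∑ i ∈ Finset.range (k+1), A.card.choose i := by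
  have : (A.powerset.filter fun V => V.card ≤ k)
      = (Finset.range (k+1)).biUnion (fun i => Finset.powersetCard i A) := by
    ext V
    simp only [Finset.mem_filter, Finset.mem_powerset, Finset.mem_biUnion, Finset.mem_range,
      Finset.mem_powersetCard, Nat.lt_succ_iff]
    constructor
    · rintro ⟨hVA, hVk⟩; exact ⟨V.card, hVk, hVA, rfl⟩
    · rintro ⟨i, hik, hVA, rfl⟩; exact ⟨hVA, hik⟩
  rw [this, Finset.card_biUnion]
  · exact Finset.sum_congr rfl fun i _ => Finset.card_powersetCard i A
  · intro i _ j _ hij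
    simp only [Finset.disjoint_left, Finset.mem_powersetCard]
    rintro V ⟨-, hi⟩ ⟨-, hj⟩
    exact hij (hi ▸ hj ▸ rfl)

lemma rpow_split (q ε : ℝ) (hq : 0 < q) (hε : 0 ≤ ε) (x y dd : ℝ) (hxy : x + y = dd) :
    ε ^ x * q ^ y = q ^ dd * (ε / q) ^ x := by
  rw [Real.div_rpow hε hq.le, mul_div_assoc']
  rw [mul_comm (q ^ dd), mul_div_assoc, ← Real.rpow_sub hq]
  rw [show dd - x = y by linarith]

lemma entropy_bound (ε : ℝ) (hε0 : 0 < ε) (hε2 : ε < 1/2) (d k : ℕ) (hk : (k:ℝ) ≤ ε * d) :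
    (∑ i ∈ Finset.range (k+1), (d.choose i : ℝ)) ≤ 2 ^ (binEnt ε * d) := by
  set q : ℝ := 1 - ε with hqdef
  have hq : 0 < q := by simp only [hqdef]; linarith
  have hr0 : 0 < ε / q := div_pos hε0 hq
  have hr1 : ε / q ≤ 1 := by rw [div_le_one hq]; simp only [hqdef]; linarith
  have hc : (0:ℝ) < ε ^ (ε * (d:ℝ)) * q ^ (q * (d:ℝ)) :=
    mul_pos (Real.rpow_pos_of_pos hε0 _) (Real.rpow_pos_of_pos hq _)
  have hA : (2:ℝ) ^ (binEnt ε * d) = (ε ^ (ε * (d:ℝ)) * q ^ (q * (d:ℝ)))⁻¹ := by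
    have key : ∀ t : ℝ, 0 < t → (2:ℝ) ^ (Real.logb 2 (1/t) * (t * (d:ℝ))) = (t ^ (t * (d:ℝ)))⁻¹ := by
      intro t ht
      rw [Real.rpow_mul (by norm_num) (Real.logb 2 (1/t)) (t * (d:ℝ)),
        Real.rpow_logb (by norm_num) (by norm_num) (by positivity),
        one_div, Real.inv_rpow ht.le, ← Real.rpow_neg ht.le]
    have h1 : binEnt ε * d = Real.logb 2 (1/ε) * (ε * d) + Real.logb 2 (1/q) * (q * d) := by
      simp only [binEnt, ← hqdef]; ring
    rw [h1, Real.rpow_add (by norm_num), key ε hε0, key q hq, mul_inv]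
  have hsumpos : (0:ℝ) < ∑ i ∈ Finset.range (k+1), (d.choose i : ℝ) :=
    Finset.sum_pos' (fun i _ => by positivity) ⟨0, Finset.mem_range.2 (Nat.succ_pos k), by simp⟩
  rw [hA, le_inv_comm₀ hsumpos hc, inv_eq_one_div, le_div_iff₀ hsumpos]
  have hkd : k ≤ d := by
    have : (k:ℝ) ≤ (d:ℝ) := le_trans hk (by nlinarith [Nat.cast_nonneg (α := ℝ) d])
    exact_mod_cast this
  calc (ε ^ (ε * (d:ℝ)) * q ^ (q * (d:ℝ))) * ∑ i ∈ Finset.range (k+1), (d.choose i : ℝ)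
      = ∑ i ∈ Finset.range (k+1), (ε ^ (ε * (d:ℝ)) * q ^ (q * (d:ℝ))) * (d.choose i : ℝ) := by
        rw [Finset.mul_sum]
    _ ≤ ∑ i ∈ Finset.range (k+1), ε ^ i * q ^ (d - i) * (d.choose i : ℝ) := by
        apply Finset.sum_le_sum
        intro i hi
        have hik : i ≤ k := Nat.lt_succ_iff.mp (Finset.mem_range.mp hi)
        have hid : i ≤ d := le_trans hik hkd
        apply mul_le_mul_of_nonneg_right _ (by positivity)
        have e1 : ε ^ (ε * (d:ℝ)) * q ^ (q * (d:ℝ)) = q ^ (d:ℝ) * (ε/q) ^ (ε * (d:ℝ)) :=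
          rpow_split q ε hq hε0.le _ _ _ (by simp only [hqdef]; ring)
        have e2 : (ε:ℝ) ^ i * q ^ (d - i) = q ^ (d:ℝ) * (ε/q) ^ ((i:ℕ):ℝ) := by
          rw [← Real.rpow_natCast ε i, ← Real.rpow_natCast q (d - i)]
          exact rpow_split q ε hq hε0.le _ _ _ (by rw [Nat.cast_sub hid]; ring)
        rw [e1, e2]
        apply mul_le_mul_of_nonneg_left _ (by positivity)
        exact Real.rpow_le_rpow_of_exponent_ge hr0 hr1 (le_trans (by exact_mod_cast hik) hk)
    _ ≤ ∑ i ∈ Finset.range (d+1), ε ^ i * q ^ (d - i) * (d.choose i : ℝ) := by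
        apply Finset.sum_le_sum_of_subset_of_nonneg
        · exact Finset.range_subset_range.mpr (by omega)
        · intro i _ _; positivity
    _ = (ε + q) ^ d := (add_pow ε q d).symm
    _ = 1 := by simp [hqdef]

lemma binEnt_lt_one {ε : ℝ} (hε0 : 0 < ε) (hε2 : ε < 1/2) : binEnt ε < 1 := by
  have hlog2 : (0:ℝ) < Real.log 2 := Real.log_pos (by norm_num)
  have h : binEnt ε = Real.binEntropy ε / Real.log 2 := by
    simp only [binEnt, Real.binEntropy, Real.logb, one_div]
    ring
  rw [h, div_lt_one hlog2]
  exact Real.binEntropy_lt_log_two.2 (by intro h; rw [h] at hε2; norm_num at hε2)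

/-- Haussler packing (with 0/1-loss) implies finite Natarajan dimension (the `k = 1` case). -/
theorem stmt9 {X Y : Type*} [DecidableEq X] {mX : MeasurableSpace X} (hmX : mX = ⊤)
    [Fintype Y] (ℋ : Set (X → Y)) (M : ℝ → ℝ)
    (hpack : ∀ μ : Measure X, IsProbabilityMeasure μ → ∀ ε : ℝ, 0 < ε → ε < 1 →
      ∃ ℋ' : Finset (X → Y), ↑ℋ' ⊆ ℋ ∧ (ℋ'.card : ℝ) ≤ M ε ∧
        ∀ F ∈ ℋ, ∃ H ∈ ℋ', (μ {x | F x ≠ H x}).toReal ≤ ε) :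
    ∀ A : Finset X, NatShatters ℋ A → ∀ ε : ℝ, 0 < ε → ε < 1 / 2 →
      (A.card : ℤ) ≤ ⌊Real.logb 2 (⌊M ε⌋₊ : ℝ) / (1 - binEnt ε)⌋ := by
  subst hmX
  letI : MeasurableSpace X := (⊤ : MeasurableSpace X)
  intro A hshat ε hε0 hε2
  classical
  obtain ⟨f₀, f₁, hne, hsel⟩ := hshat
  have hEnt : binEnt ε < 1 := binEnt_lt_one hε0 hε2
  have hden : 0 < 1 - binEnt ε := by linarith
  have hRHS0 : 0 ≤ Real.logb 2 (⌊M ε⌋₊ : ℝ) / (1 - binEnt ε) := by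
    apply div_nonneg _ hden.le
    rcases Nat.eq_zero_or_pos ⌊M ε⌋₊ with h | h
    · simp [h]
    · exact Real.logb_nonneg (by norm_num) (by exact_mod_cast h)
  rcases Nat.eq_zero_or_pos A.card with hd0 | hdpos
  · rw [hd0]
    exact_mod_cast Int.le_floor.2 (by simpa using hRHS0)
  set d := A.card with hddef
  have hdR : (0:ℝ) < d := by exact_mod_cast hdpos
  -- the uniform probability measure on A
  set μ : Measure X := (d : ℝ≥0∞)⁻¹ • ∑ a ∈ A, @Measure.dirac X ⊤ a with hμdef
  have hμS : ∀ S : Set X, μ S = ((A.filter (· ∈ S)).card : ℝ≥0∞) / d := by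
    intro S
    rw [hμdef, Measure.smul_apply, Measure.finset_sum_apply]
    have : ∀ a ∈ A, (@Measure.dirac X ⊤ a) S = if a ∈ S then 1 else 0 := by
      intro a _
      rw [Measure.dirac_apply' a trivial]
      simp [Set.indicator_apply]
    rw [Finset.sum_congr rfl this, Finset.sum_boole, smul_eq_mul, mul_comm, div_eq_mul_inv]
  have hprob : IsProbabilityMeasure μ := by
    constructor
    rw [hμS]
    simp only [Set.mem_univ, Finset.filter_true]
    exact ENNReal.div_self (by exact_mod_cast hdpos.ne') (by simp)
  obtain ⟨ℋ', hsub, hcard, hcover⟩ := hpack μ hprob ε hε0 (by linarith)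
  choose g hgℋ hgval using hsel
  choose ψ hψmem hψdist using fun (U : Finset X) (hU : U ⊆ A) => hcover (g U hU) (hgℋ U hU)
  set Ψ : Finset X → (X → Y) := fun U => if h : U ⊆ A then ψ U h else f₀ with hΨdef
  set k : ℕ := ⌊ε * d⌋₊ with hkdef
  set B : ℕ := ∑ i ∈ Finset.range (k+1), d.choose i with hBdef
  -- fiber bound
  have hfiber : ∀ H ∈ ℋ', (A.powerset.filter fun U => Ψ U = H).card ≤ B := by
    intro H _
    set UH : Finset X := A.filter (fun a => H a = f₁ a) with hUHdef
    have := Finset.card_le_card_of_injOn (fun U => U ∆ UH)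
      (s := A.powerset.filter fun U => Ψ U = H)
      (t := A.powerset.filter fun V => V.card ≤ k) ?_ ?_
    · rw [ball_count] at this; exact this
    · intro U hU
      rw [Finset.mem_coe, Finset.mem_filter, Finset.mem_powerset] at hU
      obtain ⟨hUA, hΨU⟩ := hU
      have hΨU' : ψ U hUA = H := by simpa only [hΨdef, dif_pos hUA] using hΨU
      -- distance bound
      have hdist := hψdist U hUA
      rw [hΨU', hμS] at hdist
      rw [ENNReal.toReal_div, ENNReal.toReal_natCast, ENNReal.toReal_natCast,
        div_le_iff₀ hdR] at hdist
      rw [Finset.filter_congr_decidable] at hdist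
      -- symmDiff is inside the disagreement set
      have hsubd : U ∆ UH ⊆ A.filter (· ∈ {x | g U hUA x ≠ H x}) := by
        intro a ha
        rw [Finset.mem_symmDiff] at ha
        rcases ha with ⟨haU, haUH⟩ | ⟨haUH, haU⟩
        · have haA : a ∈ A := hUA haU
          have hHa : H a ≠ f₁ a := fun h => haUH (Finset.mem_filter.2 ⟨haA, h⟩)
          refine Finset.mem_filter.2 ⟨haA, ?_⟩
          rw [Set.mem_setOf_eq, hgval U hUA a haA, if_pos haU]
          exact fun h => hHa h.symm
        · rw [hUHdef, Finset.mem_filter] at haUH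
          obtain ⟨haA, hHa⟩ := haUH
          refine Finset.mem_filter.2 ⟨haA, ?_⟩
          rw [Set.mem_setOf_eq, hgval U hUA a haA, if_neg haU, hHa]
          exact hne a haA
      have hcardle : ((U ∆ UH).card : ℝ) ≤ ε * d :=
        le_trans (by exact_mod_cast Finset.card_le_card hsubd) hdist
      refine Finset.mem_filter.2 ⟨Finset.mem_powerset.2 ?_, Nat.le_floor hcardle⟩
      intro a ha
      rw [Finset.mem_symmDiff] at ha
      rcases ha with ⟨haU, _⟩ | ⟨haUH, _⟩
      · exact hUA haU
      · exact (Finset.mem_filter.1 haUH).1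
    · intro U1 h1 U2 h2 heq
      have heq' : U1 ∆ UH = U2 ∆ UH := heq
      have : (U1 ∆ UH) ∆ UH = (U2 ∆ UH) ∆ UH := by rw [heq']
      rwa [symmDiff_symmDiff_cancel_right, symmDiff_symmDiff_cancel_right] at this
  -- counting
  have hΨmem : ∀ U ∈ A.powerset, Ψ U ∈ ℋ' := by
    intro U hU
    have hUA : U ⊆ A := Finset.mem_powerset.1 hU
    rw [hΨdef]; simp only [dif_pos hUA]; exact hψmem U hUA
  have hcount : 2 ^ d ≤ ℋ'.card * B := by
    calc 2 ^ d = A.powerset.card := (Finset.card_powerset A).symm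
      _ = ∑ H ∈ ℋ', (A.powerset.filter fun U => Ψ U = H).card :=
          Finset.card_eq_sum_card_fiberwise hΨmem
      _ ≤ ∑ _H ∈ ℋ', B := Finset.sum_le_sum hfiber
      _ = ℋ'.card * B := by rw [Finset.sum_const, smul_eq_mul]
  -- the chosen cover is nonempty
  have hm1 : 1 ≤ ⌊M ε⌋₊ := by
    have : ψ ∅ (Finset.empty_subset A) ∈ ℋ' := hψmem ∅ _
    have h1 : 1 ≤ ℋ'.card := Finset.card_pos.2 ⟨_, this⟩
    exact le_trans h1 (Nat.le_floor (le_trans (by exact_mod_cast le_refl _) hcard))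
  set m : ℕ := ⌊M ε⌋₊ with hmdef
  have hmR : (1:ℝ) ≤ m := by exact_mod_cast hm1
  -- real chain
  have hBR : (B:ℝ) ≤ 2 ^ (binEnt ε * d) := by
    rw [hBdef]
    push_cast
    exact entropy_bound ε hε0 hε2 d k (Nat.floor_le (by positivity))
  have hcardm : (ℋ'.card : ℝ) ≤ m := by
    exact_mod_cast Nat.le_floor hcard
  have hmain : (2:ℝ) ^ ((1 - binEnt ε) * d) ≤ m := by
    have h2d : (2:ℝ) ^ ((d:ℕ):ℝ) ≤ (m:ℝ) * 2 ^ (binEnt ε * d) := by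
      rw [Real.rpow_natCast]
      calc ((2:ℝ) ^ d) ≤ (ℋ'.card : ℝ) * B := by exact_mod_cast hcount
        _ ≤ (m:ℝ) * 2 ^ (binEnt ε * d) :=
          mul_le_mul hcardm hBR (by positivity) (by positivity)
    have : (2:ℝ) ^ ((1 - binEnt ε) * d) = 2 ^ ((d:ℕ):ℝ) / 2 ^ (binEnt ε * d) := by
      rw [← Real.rpow_sub (by norm_num)]
      ring_nf
    rw [this, div_le_iff₀ (by positivity)]
    exact h2d
  have hlog : (1 - binEnt ε) * d ≤ Real.logb 2 (m:ℝ) := by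
    have := Real.logb_le_logb_of_le (b := 2) (by norm_num)
      (Real.rpow_pos_of_pos (by norm_num) _) hmain
    rwa [Real.logb_rpow (by norm_num) (by norm_num)] at this
  have hfinal : (d:ℝ) ≤ Real.logb 2 (m:ℝ) / (1 - binEnt ε) := by
    rw [le_div_iff₀ hden]
    linarith [hlog]
  exact Int.le_floor.2 (by push_cast; exact hfinal)
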